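/- arXiv:2104.09485 — 2 statements merged into one kernel-verified Lean document; each statement's English description precedes it below -/
import Mathlib

section
/- Let (θₖ)_{k>n} be complex numbers with ∑_{k>n} (1+k)^{2β} |θₖ|² ≤ L², where β > 1/2. Then ∑_{j=1}^n |∑_{k>n} θₖ exp(−2πikj/n)|² = n·∑_{m=n+1}^{2n} |∑_{r=0}^∞ θ_{m+rn}|² ≤ C·n^{1−2β} for a constant C depending only on L and β. -/
open Complex


lemma aliasing_inj (n : ℕ) (hn : 1 ≤ n) :
    Function.Injective (fun p : (Finset.Icc (n+1) (2*n)) × ℕ => (p.1 : ℕ) + p.2 * n) := by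
  rintro ⟨⟨m, hm⟩, r⟩ ⟨⟨m', hm'⟩, r'⟩ h
  simp only [Finset.mem_Icc] at hm hm'
  simp only at h
  have key : ∀ a a' b b' : ℕ, n + 1 ≤ a → a ≤ 2*n → n+1 ≤ a' → a' ≤ 2*n →
      a + b * n = a' + b' * n → b < b' → False := by
    intro a a' b b' h1 h2 h3 h4 heq hlt
    have : (b+1) * n ≤ b' * n := Nat.mul_le_mul_right n hlt
    rw [add_mul, one_mul] at this
    omega
  have hr : r = r' := by
    rcases lt_trichotomy r r' with hlt | he | hgt
    · exact absurd (key m m' r r' hm.1 hm.2 hm'.1 hm'.2 h hlt) (by simp)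
    · exact he
    · exact absurd (key m' m r' r hm'.1 hm'.2 hm.1 hm.2 h.symm hgt) (by simp)
  subst hr
  have : m = m' := by omega
  subst this
  rfl

lemma aliasing_range (n : ℕ) (hn : 1 ≤ n) {k : ℕ} (hk : n < k) :
    ∃ p : (Finset.Icc (n+1) (2*n)) × ℕ, (p.1 : ℕ) + p.2 * n = k := by
  set s := (k - (n+1)) % n with hs
  set q := (k - (n+1)) / n with hq
  have h2 : s < n := Nat.mod_lt _ (by omega)
  have h1 : s + n * q = k - (n+1) := Nat.mod_add_div _ _
  refine ⟨⟨⟨n + 1 + s, ?_⟩, q⟩, ?_⟩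
  · simp only [Finset.mem_Icc]; omega
  · simp only
    have : n + 1 + s + q * n = n + 1 + (s + n * q) := by ring
    rw [this, h1]; omega

lemma tsum_reindex {M : Type*} [NormedAddCommGroup M] [CompleteSpace M]
    (n : ℕ) (hn : 1 ≤ n) (f : ℕ → M) (hf : Summable f)
    (h0 : ∀ k, k ≤ n → f k = 0) :
    ∑' k, f k = ∑ m ∈ Finset.Icc (n+1) (2*n), ∑' r : ℕ, f (m + r * n) := by
  have hinj := aliasing_inj n hn
  have hsupp : Function.support f ⊆
      Set.range (fun p : (Finset.Icc (n+1) (2*n)) × ℕ => (p.1 : ℕ) + p.2 * n) := by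
    intro k hk
    have hnk : n < k := by
      by_contra h
      exact hk (h0 k (le_of_not_gt h))
    obtain ⟨p, hp⟩ := aliasing_range n hn hnk
    exact ⟨p, hp⟩
  rw [← hinj.tsum_eq hsupp]
  rw [show (fun p : (Finset.Icc (n+1) (2*n)) × ℕ => f ((p.1 : ℕ) + p.2 * n))
      = (f ∘ fun p : (Finset.Icc (n+1) (2*n)) × ℕ => (p.1 : ℕ) + p.2 * n) from rfl,
    Summable.tsum_prod (hf.comp_injective hinj), ← Finset.tsum_subtype]
  rfl


lemma sum_pow_icc (n : ℕ) (hn : 1 ≤ n) (w : ℂ) (hwn : w ^ n = 1) :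
    ∑ j ∈ Finset.Icc 1 n, w ^ j = if w = 1 then (n : ℂ) else 0 := by
  split_ifs with h
  · subst h; simp
  · have hw1 : w - 1 ≠ 0 := sub_ne_zero.2 h
    have h1 : ∑ j ∈ Finset.range (n+1), w ^ j = 1 + ∑ j ∈ Finset.Icc 1 n, w ^ j := by
      rw [Finset.range_eq_Ico, Finset.Ico_add_one_right_eq_Icc, Finset.Icc_eq_cons_Ioc (Nat.zero_le n),
        Finset.sum_cons, ← Finset.Icc_add_one_left_eq_Ioc]
      simp
    have h2 : ∑ j ∈ Finset.range (n+1), w ^ j = 1 := by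
      rw [geom_sum_eq h, pow_succ, hwn, one_mul, div_self hw1]
    have := h1.symm.trans h2
    linear_combination this - 1

lemma ortho (n : ℕ) (hn : 1 ≤ n) {m m' : ℕ} (hm : m ∈ Finset.Icc (n+1) (2*n))
    (hm' : m' ∈ Finset.Icc (n+1) (2*n)) :
    ∑ j ∈ Finset.Icc 1 n,
      (Complex.exp (-2*Real.pi*I*m/n) * (starRingEnd ℂ) (Complex.exp (-2*Real.pi*I*m'/n))) ^ j
      = if m = m' then (n:ℂ) else 0 := by
  have hn0 : (n:ℂ) ≠ 0 := Nat.cast_ne_zero.2 (by omega)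
  have hw : Complex.exp (-2*Real.pi*I*m/n) * (starRingEnd ℂ) (Complex.exp (-2*Real.pi*I*m'/n))
      = Complex.exp ((((m':ℤ) - (m:ℤ) : ℤ) : ℂ) * (2*Real.pi*I) / n) := by
    rw [← Complex.exp_conj, ← Complex.exp_add]
    congr 1
    simp only [map_div₀, map_mul, map_neg, map_ofNat, Complex.conj_ofReal, Complex.conj_I,
      Complex.conj_natCast]
    push_cast
    field_simp
    ring
  have hpow : (Complex.exp (-2*Real.pi*I*m/n) * (starRingEnd ℂ) (Complex.exp (-2*Real.pi*I*m'/n))) ^ n = 1 := by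
    rw [hw, ← Complex.exp_nat_mul]
    have he : (n:ℂ) * ((((m':ℤ) - (m:ℤ) : ℤ) : ℂ) * (2*Real.pi*I) / n)
        = (((m':ℤ) - (m:ℤ) : ℤ) : ℂ) * (2*Real.pi*I) := by field_simp
    rw [he, Complex.exp_int_mul_two_pi_mul_I]
  rw [sum_pow_icc n hn _ hpow]
  by_cases hmm : m = m'
  · subst hmm
    rw [if_pos rfl, if_pos]
    rw [hw]; simp
  · rw [if_neg hmm, if_neg]
    intro hcon
    rw [hw, Complex.exp_eq_one_iff] at hcon
    obtain ⟨t, ht⟩ := hcon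
    have h2pi : (2*(Real.pi:ℂ)*I) ≠ 0 := by
      simp [Real.pi_ne_zero, I_ne_zero]
    have h2 : (((m':ℤ) - (m:ℤ) : ℤ) : ℂ) = (t : ℂ) * n := by
      refine mul_right_cancel₀ h2pi ?_
      calc (((m':ℤ) - (m:ℤ) : ℤ) : ℂ) * (2*(Real.pi:ℂ)*I)
          = ((((m':ℤ) - (m:ℤ) : ℤ) : ℂ) * (2*(Real.pi:ℂ)*I) / n) * n := by field_simp
        _ = ((t:ℂ) * (2 * Real.pi * I)) * n := by rw [ht]
        _ = (t : ℂ) * n * (2*(Real.pi:ℂ)*I) := by ring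
    have h3 : (m':ℤ) - (m:ℤ) = t * n := by exact_mod_cast h2
    simp only [Finset.mem_Icc] at hm hm'
    have hb1 : (n:ℤ) + 1 ≤ (m:ℤ) := by exact_mod_cast hm.1
    have hb2 : (m:ℤ) ≤ 2*n := by exact_mod_cast hm.2
    have hb3 : (n:ℤ) + 1 ≤ (m':ℤ) := by exact_mod_cast hm'.1
    have hb4 : (m':ℤ) ≤ 2*n := by exact_mod_cast hm'.2
    have hne : (m:ℤ) ≠ (m':ℤ) := by exact_mod_cast hmm
    rcases lt_trichotomy t 0 with htl | hte | htg
    · have : t * (n:ℤ) ≤ (-1) * n := mul_le_mul_of_nonneg_right (by omega) (by positivity)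
      omega
    · subst hte; rw [zero_mul] at h3; omega
    · have : (1:ℤ) * n ≤ t * n := mul_le_mul_of_nonneg_right (by omega) (by positivity)
      omega

lemma tsum_cauchy_schwarz (u v : ℕ → ℝ) (hu : ∀ i, 0 ≤ u i) (hv : ∀ i, 0 ≤ v i)
    (h2u : Summable fun i => u i ^ 2) (h2v : Summable fun i => v i ^ 2) :
    (∑' i, u i * v i) ^ 2 ≤ (∑' i, u i ^ 2) * (∑' i, v i ^ 2) := by
  have huv : Summable fun i => u i * v i := by
    apply Summable.of_nonneg_of_le (fun i => mul_nonneg (hu i) (hv i))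
      (fun i => ?_) ((h2u.add h2v).div_const 2)
    have h := two_mul_le_add_sq (u i) (v i)
    show u i * v i ≤ (u i ^ 2 + v i ^ 2) / 2
    linarith
  set A := ∑' i, u i ^ 2 with hA'
  set B := ∑' i, v i ^ 2 with hB'
  have hA : 0 ≤ A := tsum_nonneg (fun i => sq_nonneg _)
  have hB : 0 ≤ B := tsum_nonneg (fun i => sq_nonneg _)
  have hle : ∑' i, u i * v i ≤ Real.sqrt (A*B) := by
    apply Summable.tsum_le_of_sum_le huv
    intro s
    rw [Real.le_sqrt (Finset.sum_nonneg fun i _ => mul_nonneg (hu i) (hv i)) (by positivity)]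
    calc (∑ i ∈ s, u i * v i)^2 ≤ (∑ i ∈ s, u i^2) * (∑ i ∈ s, v i^2) :=
          Finset.sum_mul_sq_le_sq_mul_sq s u v
      _ ≤ A * B := mul_le_mul (Summable.sum_le_tsum s (fun i _ => sq_nonneg _) h2u)
          (Summable.sum_le_tsum s (fun i _ => sq_nonneg _) h2v)
          (Finset.sum_nonneg fun i _ => sq_nonneg _) hA
  calc (∑' i, u i * v i)^2 ≤ (Real.sqrt (A*B))^2 :=
        pow_le_pow_left₀ (tsum_nonneg fun i => mul_nonneg (hu i) (hv i)) hle 2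
    _ = A*B := Real.sq_sqrt (by positivity)

theorem aliasing_tail_bound (β L : ℝ) (hβ : 1 / 2 < β) (hL : 0 < L) :
    ∃ C > 0, ∀ (n : ℕ), 1 ≤ n → ∀ θ : ℕ → ℂ,
      (Summable fun k : ℕ => (1 + (k:ℝ)) ^ (2 * β) * ‖θ k‖ ^ 2) →
      (∑' k : ℕ, (if n < k then (1 + (k:ℝ)) ^ (2 * β) * ‖θ k‖ ^ 2 else 0) ≤ L ^ 2) →
      (∑ j ∈ Finset.Icc 1 n,
          ‖∑' k : ℕ, (if n < k then θ k * Complex.exp (-2 * Real.pi * I * k * j / n) else 0)‖ ^ 2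
        = n * ∑ m ∈ Finset.Icc (n + 1) (2 * n), ‖∑' r : ℕ, θ (m + r * n)‖ ^ 2) ∧
      (∑ j ∈ Finset.Icc 1 n,
          ‖∑' k : ℕ, (if n < k then θ k * Complex.exp (-2 * Real.pi * I * k * j / n) else 0)‖ ^ 2
        ≤ C * (n:ℝ) ^ ((1:ℝ) - 2 * β)) := by
  -- summability of the zeta-like series
  have h2β : (1:ℝ) < 2 * β := by linarith
  have hZsum : Summable (fun r : ℕ => (1 + (r:ℝ)) ^ (-(2*β))) := by
    have h1 : Summable (fun r : ℕ => ((r:ℝ)) ^ (-(2*β))) :=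
      Real.summable_nat_rpow.2 (by linarith)
    have h2 := (summable_nat_add_iff 1).2 h1
    refine h2.congr fun r => ?_
    congr 1
    push_cast
    ring
  set Z := ∑' r : ℕ, (1 + (r:ℝ)) ^ (-(2*β)) with hZ
  have hZnonneg : ∀ r : ℕ, 0 ≤ (1 + (r:ℝ)) ^ (-(2*β)) :=
    fun r => Real.rpow_nonneg (by positivity) _
  have hZpos : 0 < Z :=
    Summable.tsum_pos hZsum hZnonneg 0 (Real.rpow_pos_of_pos (by norm_num) _)
  refine ⟨L^2 * Z, by positivity, ?_⟩
  intro n hn θ hsum hbound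
  have hn0R : (0:ℝ) < n := by exact_mod_cast hn
  have hn0C : (n:ℂ) ≠ 0 := Nat.cast_ne_zero.2 (by omega)
  set s := Finset.Icc (n+1) (2*n) with hs
  set a : ℕ → ℂ := fun m => ∑' r : ℕ, θ (m + r * n) with ha
  set ζ : ℕ → ℂ := fun m => Complex.exp (-2 * Real.pi * I * m / n) with hζ
  -- basic rpow facts
  have hposx : ∀ k : ℕ, (0:ℝ) < 1 + (k:ℝ) := fun k => by positivity
  have hsq_rpow : ∀ (x c : ℝ), 0 < x → (x ^ (-c)) ^ 2 = x ^ (-(2*c)) := by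
    intro x c hx
    rw [sq, ← Real.rpow_add hx]
    ring_nf
  have hsqp_rpow : ∀ (x c : ℝ), 0 < x → (x ^ c) ^ 2 = x ^ (2*c) := by
    intro x c hx
    rw [sq, ← Real.rpow_add hx]
    ring_nf
  -- summability of ‖θ‖
  have hθnorm : Summable fun k : ℕ => ‖θ k‖ := by
    apply Summable.of_nonneg_of_le (fun k => norm_nonneg _) (fun k => ?_)
      ((hZsum.add hsum).div_const 2)
    show ‖θ k‖ ≤ ((1 + (k:ℝ)) ^ (-(2*β)) + (1 + (k:ℝ)) ^ (2*β) * ‖θ k‖ ^ 2) / 2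
    have hab : (1 + (k:ℝ)) ^ (-β) * ((1 + (k:ℝ)) ^ β * ‖θ k‖) = ‖θ k‖ := by
      rw [← mul_assoc, ← Real.rpow_add (hposx k)]
      simp
    have h1 := two_mul_le_add_sq ((1 + (k:ℝ)) ^ (-β)) ((1 + (k:ℝ)) ^ β * ‖θ k‖)
    rw [mul_assoc, hab] at h1
    have h2 : ((1 + (k:ℝ)) ^ (-β)) ^ 2 = (1 + (k:ℝ)) ^ (-(2*β)) := hsq_rpow _ _ (hposx k)
    have h3 : ((1 + (k:ℝ)) ^ β * ‖θ k‖) ^ 2 = (1 + (k:ℝ)) ^ (2*β) * ‖θ k‖ ^ 2 := by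
      rw [mul_pow, hsqp_rpow _ _ (hposx k)]
    rw [h2, h3] at h1
    linarith
  -- norm of the exponential is one
  have hnorm_exp : ∀ (k j : ℕ), ‖Complex.exp (-2 * Real.pi * I * k * j / n)‖ = 1 := by
    intro k j
    have he : (-2 * (Real.pi:ℂ) * I * k * j / n) = (((-2 * Real.pi * k * j / n : ℝ)) : ℂ) * I := by
      push_cast
      ring
    rw [he, Complex.norm_exp_ofReal_mul_I]
  -- the inner injectivity for fixed m
  have hinj_r : ∀ m : ℕ, Function.Injective (fun r : ℕ => m + r * n) := by
    intro m r r' h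
    simp only at h
    have := Nat.add_left_cancel h
    exact Nat.eq_of_mul_eq_mul_right (by omega) this
  -- KEY reindexing identity for the Fourier sums
  have key : ∀ j : ℕ,
      (∑' k : ℕ, (if n < k then θ k * Complex.exp (-2 * Real.pi * I * k * j / n) else 0))
        = ∑ m ∈ s, a m * ζ m ^ j := by
    intro j
    have hfsum : Summable (fun k : ℕ =>
        if n < k then θ k * Complex.exp (-2 * Real.pi * I * k * j / n) else 0) := by
      apply Summable.of_norm_bounded hθnorm
      intro k
      by_cases hk : n < k
      · rw [if_pos hk, norm_mul, hnorm_exp k j, mul_one]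
      · rw [if_neg hk]
        simp
    rw [tsum_reindex n hn _ hfsum (fun k hk => if_neg (not_lt.2 hk))]
    refine Finset.sum_congr rfl fun m hm => ?_
    rw [hs, Finset.mem_Icc] at hm
    have hterm : ∀ r : ℕ,
        (if n < m + r * n then θ (m + r * n) * Complex.exp (-2 * Real.pi * I * (m + r*n : ℕ) * j / n) else 0)
          = θ (m + r * n) * ζ m ^ j := by
      intro r
      rw [if_pos (by omega : n < m + r * n)]
      congr 1
      obtain ⟨t, ht⟩ : ∃ t : ℤ, (t:ℂ) = -((r:ℂ) * (j:ℂ)) := ⟨-((r:ℤ)*(j:ℤ)), by push_cast; ring⟩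
      have hee : (-2 * (Real.pi:ℂ) * I * ((m + r*n : ℕ):ℂ) * j / n)
          = (j:ℂ) * (-2 * Real.pi * I * m / n) + (t:ℂ) * (2 * Real.pi * I) := by
        rw [ht]
        push_cast
        field_simp
        ring
      rw [hee, Complex.exp_add, Complex.exp_int_mul_two_pi_mul_I, mul_one,
        Complex.exp_nat_mul]
    rw [tsum_congr hterm, tsum_mul_right]
  -- squared-norm to complex product
  have hsqc : ∀ z : ℂ, ((‖z‖^2 : ℝ) : ℂ) = z * (starRingEnd ℂ) z := by
    intro z
    rw [Complex.mul_conj]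
    norm_cast
    rw [Complex.sq_norm]
  -- orthogonality computation over ℂ
  have hC : ∑ j ∈ Finset.Icc 1 n, ((‖∑ m ∈ s, a m * ζ m ^ j‖^2 : ℝ) : ℂ)
      = (n:ℂ) * ∑ m ∈ s, ((‖a m‖^2 : ℝ) : ℂ) := by
    calc ∑ j ∈ Finset.Icc 1 n, ((‖∑ m ∈ s, a m * ζ m ^ j‖^2 : ℝ) : ℂ)
        = ∑ j ∈ Finset.Icc 1 n, (∑ m ∈ s, a m * ζ m ^ j) *
            (starRingEnd ℂ) (∑ m' ∈ s, a m' * ζ m' ^ j) := by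
          exact Finset.sum_congr rfl fun j _ => hsqc _
      _ = ∑ j ∈ Finset.Icc 1 n, ∑ m ∈ s, ∑ m' ∈ s,
            (a m * (starRingEnd ℂ) (a m')) * (ζ m * (starRingEnd ℂ) (ζ m')) ^ j := by
          refine Finset.sum_congr rfl fun j _ => ?_
          rw [map_sum, Finset.sum_mul_sum]
          refine Finset.sum_congr rfl fun m _ => Finset.sum_congr rfl fun m' _ => ?_
          simp only [map_mul, map_pow]
          rw [mul_pow]
          ring
      _ = ∑ m ∈ s, ∑ m' ∈ s,
            (a m * (starRingEnd ℂ) (a m')) * ∑ j ∈ Finset.Icc 1 n, (ζ m * (starRingEnd ℂ) (ζ m')) ^ j := by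
          rw [Finset.sum_comm]
          refine Finset.sum_congr rfl fun m _ => ?_
          rw [Finset.sum_comm]
          exact Finset.sum_congr rfl fun m' _ => (Finset.mul_sum _ _ _).symm
      _ = ∑ m ∈ s, ∑ m' ∈ s,
            (a m * (starRingEnd ℂ) (a m')) * (if m = m' then (n:ℂ) else 0) := by
          refine Finset.sum_congr rfl fun m hm => Finset.sum_congr rfl fun m' hm' => ?_
          rw [hζ]
          rw [ortho n hn (hs ▸ hm) (hs ▸ hm')]
      _ = ∑ m ∈ s, (a m * (starRingEnd ℂ) (a m)) * n := by
          refine Finset.sum_congr rfl fun m hm => ?_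
          simp only [mul_ite, mul_zero]
          rw [Finset.sum_ite_eq s m (fun m' => a m * (starRingEnd ℂ) (a m') * n), if_pos hm]
      _ = (n:ℂ) * ∑ m ∈ s, ((‖a m‖^2 : ℝ) : ℂ) := by
          rw [Finset.mul_sum]
          refine Finset.sum_congr rfl fun m _ => ?_
          rw [hsqc]
          ring
  -- the real identity
  have hid : ∑ j ∈ Finset.Icc 1 n, ‖∑ m ∈ s, a m * ζ m ^ j‖^2
      = (n:ℝ) * ∑ m ∈ s, ‖a m‖^2 := by
    have : ((∑ j ∈ Finset.Icc 1 n, ‖∑ m ∈ s, a m * ζ m ^ j‖^2 : ℝ) : ℂ)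
        = (((n:ℝ) * ∑ m ∈ s, ‖a m‖^2 : ℝ) : ℂ) := by
      push_cast
      push_cast at hC
      convert hC using 2
    exact_mod_cast this
  have hLHS : ∑ j ∈ Finset.Icc 1 n,
      ‖∑' k : ℕ, (if n < k then θ k * Complex.exp (-2 * Real.pi * I * k * j / n) else 0)‖ ^ 2
      = ∑ j ∈ Finset.Icc 1 n, ‖∑ m ∈ s, a m * ζ m ^ j‖^2 :=
    Finset.sum_congr rfl fun j _ => by rw [key j]
  constructor
  · rw [hLHS, hid]
  · -- the bound
    rw [hLHS, hid]
    -- Cauchy-Schwarz per m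
    set c : ℝ := (n:ℝ) ^ (-(2*β)) * Z with hc
    have hcnonneg : 0 ≤ c := mul_nonneg (Real.rpow_nonneg hn0R.le _) hZpos.le
    set B : ℕ → ℝ := fun m => ∑' r : ℕ, (1 + ((m + r * n : ℕ):ℝ)) ^ (2*β) * ‖θ (m + r*n)‖ ^ 2 with hB
    have hBsum : ∀ m : ℕ, Summable (fun r : ℕ => (1 + ((m + r * n : ℕ):ℝ)) ^ (2*β) * ‖θ (m + r*n)‖ ^ 2) :=
      fun m => hsum.comp_injective (hinj_r m)
    have hBnonneg : ∀ m : ℕ, 0 ≤ B m :=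
      fun m => tsum_nonneg fun r => mul_nonneg (Real.rpow_nonneg (hposx _).le _) (sq_nonneg _)
    -- pointwise domination of the weights
    have hwle : ∀ m r : ℕ, n + 1 ≤ m →
        (1 + ((m + r * n : ℕ):ℝ)) ^ (-(2*β)) ≤ (n:ℝ) ^ (-(2*β)) * (1 + (r:ℝ)) ^ (-(2*β)) := by
      intro m r hm
      have hmr : (n:ℝ) + 1 ≤ m := by exact_mod_cast hm
      have h1 : (n:ℝ) * (1 + r) ≤ 1 + ((m + r * n : ℕ):ℝ) := by
        push_cast
        nlinarith [hn0R, (Nat.cast_nonneg r : (0:ℝ) ≤ r)]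
      have h2 : (1 + ((m + r * n : ℕ):ℝ)) ^ (-(2*β)) ≤ ((n:ℝ) * (1 + r)) ^ (-(2*β)) :=
        Real.rpow_le_rpow_of_nonpos (by positivity) h1 (by linarith)
      rwa [Real.mul_rpow hn0R.le (by positivity)] at h2
    have hu2sum : ∀ m : ℕ, n + 1 ≤ m →
        Summable (fun r : ℕ => (1 + ((m + r * n : ℕ):ℝ)) ^ (-(2*β))) := by
      intro m hm
      apply Summable.of_nonneg_of_le (fun r => Real.rpow_nonneg (hposx _).le _)
        (fun r => hwle m r hm) (hZsum.mul_left _)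
    have hu2le : ∀ m : ℕ, n + 1 ≤ m →
        (∑' r : ℕ, (1 + ((m + r * n : ℕ):ℝ)) ^ (-(2*β))) ≤ c := by
      intro m hm
      rw [hc, ← tsum_mul_left]
      exact Summable.tsum_le_tsum (fun r => hwle m r hm) (hu2sum m hm) (hZsum.mul_left _)
    -- per-m bound on ‖a m‖²
    have ham : ∀ m ∈ s, ‖a m‖^2 ≤ c * B m := by
      intro m hm
      rw [hs, Finset.mem_Icc] at hm
      have hnm : n + 1 ≤ m := hm.1
      have hθm : Summable fun r : ℕ => ‖θ (m + r * n)‖ := hθnorm.comp_injective (hinj_r m)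
      have h1 : ‖a m‖ ≤ ∑' r : ℕ, ‖θ (m + r * n)‖ := norm_tsum_le_tsum_norm hθm
      have hcs := tsum_cauchy_schwarz
        (fun r => (1 + ((m + r * n : ℕ):ℝ)) ^ (-β))
        (fun r => (1 + ((m + r * n : ℕ):ℝ)) ^ β * ‖θ (m + r*n)‖)
        (fun r => Real.rpow_nonneg (hposx _).le _)
        (fun r => mul_nonneg (Real.rpow_nonneg (hposx _).le _) (norm_nonneg _))
        (by
          refine Summable.congr (hu2sum m hnm) fun r => ?_
          rw [hsq_rpow _ _ (hposx _)])
        (by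
          refine Summable.congr (hBsum m) fun r => ?_
          rw [mul_pow, hsqp_rpow _ _ (hposx _)])
      have huv : (fun r : ℕ => (1 + ((m + r * n : ℕ):ℝ)) ^ (-β) *
          ((1 + ((m + r * n : ℕ):ℝ)) ^ β * ‖θ (m + r*n)‖)) = fun r => ‖θ (m + r * n)‖ := by
        funext r
        rw [← mul_assoc, ← Real.rpow_add (hposx _)]
        simp
      rw [huv] at hcs
      have hu2 : (∑' r : ℕ, ((1 + ((m + r * n : ℕ):ℝ)) ^ (-β)) ^ 2)
          = ∑' r : ℕ, (1 + ((m + r * n : ℕ):ℝ)) ^ (-(2*β)) :=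
        tsum_congr fun r => hsq_rpow _ _ (hposx _)
      have hv2 : (∑' r : ℕ, ((1 + ((m + r * n : ℕ):ℝ)) ^ β * ‖θ (m + r*n)‖) ^ 2) = B m := by
        refine tsum_congr fun r => ?_
        rw [mul_pow, hsqp_rpow _ _ (hposx _)]
      rw [hu2, hv2] at hcs
      calc ‖a m‖^2 ≤ (∑' r : ℕ, ‖θ (m + r * n)‖)^2 := by
            apply pow_le_pow_left₀ (norm_nonneg _) h1
        _ ≤ (∑' r : ℕ, (1 + ((m + r * n : ℕ):ℝ)) ^ (-(2*β))) * B m := hcs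
        _ ≤ c * B m := mul_le_mul_of_nonneg_right (hu2le m hnm) (hBnonneg m)
    -- sum of the tail weights
    have htail : ∑ m ∈ s, B m ≤ L ^ 2 := by
      have hitesum : Summable (fun k : ℕ =>
          if n < k then (1 + (k:ℝ)) ^ (2*β) * ‖θ k‖ ^ 2 else 0) := by
        apply Summable.of_nonneg_of_le (fun k => ?_) (fun k => ?_) hsum
        · split_ifs
          · exact mul_nonneg (Real.rpow_nonneg (hposx _).le _) (sq_nonneg _)
          · exact le_refl 0
        · split_ifs
          · exact le_refl _
          · exact mul_nonneg (Real.rpow_nonneg (hposx _).le _) (sq_nonneg _)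
      have hre := tsum_reindex n hn _ hitesum (fun k hk => if_neg (not_lt.2 hk))
      have hre2 : ∑ m ∈ s, B m = ∑' k : ℕ, (if n < k then (1 + (k:ℝ)) ^ (2*β) * ‖θ k‖ ^ 2 else 0) := by
        rw [hre]
        refine Finset.sum_congr rfl fun m hm => ?_
        rw [Finset.mem_Icc] at hm
        exact (tsum_congr fun r => (if_pos (by omega : n < m + r * n))).symm
      rw [hre2]
      exact hbound
    -- put it together
    calc (n:ℝ) * ∑ m ∈ s, ‖a m‖^2
        ≤ (n:ℝ) * ∑ m ∈ s, (c * B m) := by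
          apply mul_le_mul_of_nonneg_left (Finset.sum_le_sum ham) hn0R.le
      _ = (n:ℝ) * (c * ∑ m ∈ s, B m) := by rw [← Finset.mul_sum]
      _ ≤ (n:ℝ) * (c * L^2) := by
          apply mul_le_mul_of_nonneg_left (mul_le_mul_of_nonneg_left htail hcnonneg) hn0R.le
      _ = L^2 * Z * (n:ℝ) ^ ((1:ℝ) - 2 * β) := by
          have hpow : (n:ℝ) * (n:ℝ) ^ (-(2*β)) = (n:ℝ) ^ ((1:ℝ) - 2*β) := by
            nth_rewrite 1 [← Real.rpow_one (n:ℝ)]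
            rw [← Real.rpow_add hn0R]
            ring_nf
          rw [hc]
          calc (n:ℝ) * ((n:ℝ) ^ (-(2*β)) * Z * L^2)
              = ((n:ℝ) * (n:ℝ) ^ (-(2*β))) * (Z * L^2) := by ring
            _ = (n:ℝ) ^ ((1:ℝ) - 2*β) * (Z * L^2) := by rw [hpow]
            _ = L^2 * Z * (n:ℝ) ^ ((1:ℝ) - 2*β) := by ring
end

section
/- Let θ₁,...,θₙ be complex numbers with ∑_{k=1}^n k^{2β}|θₖ|² ≤ L² for some β > 1/2. Then n² ∑_{j=1}^n (|θⱼ|²/j²)·|e^{2πij/n} − 1 − 2πij/n|² ≤ C·max(n^{−2}, n^{−2β}) for a constant C depending only on L and β. -/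
open Complex

lemma one_sub_cos_le (x : ℝ) : 1 - Real.cos x ≤ x ^ 2 / 2 := by
  have h : Real.cos (x/2) ^ 2 = 1/2 + Real.cos x / 2 := by
    have := Real.cos_sq (x/2); rwa [mul_div_cancel₀ x two_ne_zero] at this
  have hs : |Real.sin (x/2)| ≤ |x/2| := Real.abs_sin_le_abs
  have hsq : Real.sin (x/2) ^ 2 ≤ (x/2) ^ 2 := by
    rw [← _root_.sq_abs, ← _root_.sq_abs (x/2)]
    exact pow_le_pow_left₀ (abs_nonneg _) hs 2
  have hpyth := Real.sin_sq_add_cos_sq (x/2)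
  nlinarith

lemma one_sub_cos_le_abs (x : ℝ) (hx : 0 ≤ x) : 1 - Real.cos x ≤ x := by
  have h : Real.cos (x/2) ^ 2 = 1/2 + Real.cos x / 2 := by
    have := Real.cos_sq (x/2); rwa [mul_div_cancel₀ x two_ne_zero] at this
  have hs : |Real.sin (x/2)| ≤ x/2 := by
    have h2 := Real.abs_sin_le_abs (x := x/2)
    rwa [_root_.abs_of_nonneg (show (0:ℝ) ≤ x/2 by linarith)] at h2
  have hs1 : |Real.sin (x/2)| ≤ 1 := Real.abs_sin_le_one _
  have hsq : Real.sin (x/2) ^ 2 ≤ x/2 := by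
    have e : Real.sin (x/2)^2 = |Real.sin (x/2)| * |Real.sin (x/2)| := by
      rw [← _root_.sq_abs, sq]
    rw [e]
    have := mul_le_mul hs hs1 (abs_nonneg _) (by linarith : (0:ℝ) ≤ x/2)
    simpa using this
  have hpyth := Real.sin_sq_add_cos_sq (x/2)
  nlinarith

lemma sub_sin_le (x : ℝ) (hx : 0 ≤ x) : x - Real.sin x ≤ x ^ 2 / 2 := by
  set f : ℝ → ℝ := fun t => t ^ 2 / 2 - t + Real.sin t with hf
  have hder : ∀ t : ℝ, HasDerivAt f (t - 1 + Real.cos t) t := by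
    intro t
    have h1 : HasDerivAt (fun t : ℝ => t ^ 2 / 2 - t + Real.sin t)
        ((2 : ℕ) * t ^ (2 - 1) / 2 - 1 + Real.cos t) t :=
      (((hasDerivAt_pow 2 t).div_const 2).sub (hasDerivAt_id t)).add (Real.hasDerivAt_sin t)
    simpa [pow_one] using h1
  have hmono : MonotoneOn f (Set.Ici (0 : ℝ)) := by
    apply monotoneOn_of_deriv_nonneg (convex_Ici 0)
    · exact (Continuous.continuousOn (by continuity))
    · intro t ht
      exact (hder t).differentiableAt.differentiableWithinAt
    · intro t ht
      rw [(hder t).deriv]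
      have ht0 : (0:ℝ) ≤ t := le_of_lt (by simpa using ht)
      have := one_sub_cos_le_abs t ht0
      linarith
  have h0 : f 0 ≤ f x := hmono (by simp) (by simpa using hx) hx
  simp only [hf] at h0
  simp at h0
  linarith

lemma key_bound (x : ℝ) (hx : 0 ≤ x) :
    ‖Complex.exp (↑x * I) - 1 - ↑x * I‖ ≤ x ^ 2 := by
  set z : ℂ := Complex.exp (↑x * I) - 1 - ↑x * I with hz
  have hre : z.re = Real.cos x - 1 := by
    simp [hz, Complex.exp_ofReal_mul_I_re]
  have him : z.im = Real.sin x - x := by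
    simp [hz, Complex.exp_ofReal_mul_I_im]
  have hsq : ‖z‖ ^ 2 = (Real.cos x - 1) ^ 2 + (Real.sin x - x) ^ 2 := by
    rw [Complex.sq_norm, Complex.normSq_apply, hre, him]; ring
  have h1 : |Real.cos x - 1| ≤ x ^ 2 / 2 := by
    have := one_sub_cos_le x
    have hc := Real.cos_le_one x
    rw [abs_le]; constructor <;> linarith
  have h2 : |Real.sin x - x| ≤ x ^ 2 / 2 := by
    have := sub_sin_le x hx
    have hs : Real.sin x ≤ x := le_trans (le_abs_self _)
      (by simpa [_root_.abs_of_nonneg hx] using Real.abs_sin_le_abs (x := x))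
    rw [abs_le]; constructor <;> [linarith; nlinarith]
  have hle : ‖z‖ ^ 2 ≤ (x ^ 2) ^ 2 := by
    rw [hsq]
    nlinarith [_root_.sq_abs (Real.cos x - 1), _root_.sq_abs (Real.sin x - x), abs_nonneg (Real.cos x - 1),
      abs_nonneg (Real.sin x - x), sq_nonneg x]
  exact le_of_pow_le_pow_left₀ two_ne_zero (by positivity) hle

theorem dft_taylor_remainder_bound (β L : ℝ) (hβ : 1 / 2 < β) (hL : 0 < L) :
    ∃ C > 0, ∀ (n : ℕ), 1 ≤ n → ∀ θ : ℕ → ℂ,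
      (∑ k ∈ Finset.Icc 1 n, (k:ℝ) ^ (2 * β) * ‖θ k‖ ^ 2 ≤ L ^ 2) →
      (n:ℝ) ^ 2 * ∑ j ∈ Finset.Icc 1 n,
          ‖θ j‖ ^ 2 / (j:ℝ) ^ 2 *
            ‖Complex.exp (2 * Real.pi * I * j / n) - 1 - 2 * Real.pi * I * j / n‖ ^ 2
        ≤ C * max ((n:ℝ) ^ (-2 : ℝ)) ((n:ℝ) ^ (-(2 * β))) := by
  refine ⟨(2 * Real.pi) ^ 4 * L ^ 2, by positivity, ?_⟩
  intro n hn θ hθ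
  have hN : (0:ℝ) < (n:ℝ) := by exact_mod_cast Nat.lt_of_lt_of_le Nat.zero_lt_one hn
  set N : ℝ := (n:ℝ) with hNdef
  set M : ℝ := max 1 (N ^ ((2:ℝ) - 2 * β)) with hMdef
  have hM0 : (0:ℝ) ≤ M := le_trans zero_le_one (le_max_left _ _)
  -- termwise bound 1
  have hterm : ∀ j ∈ Finset.Icc 1 n,
      ‖θ j‖ ^ 2 / (j:ℝ) ^ 2 *
          ‖Complex.exp (2 * Real.pi * I * j / n) - 1 - 2 * Real.pi * I * j / n‖ ^ 2
        ≤ (2 * Real.pi) ^ 4 / N ^ 4 * ((j:ℝ) ^ 2 * ‖θ j‖ ^ 2) := by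
    intro j hj
    obtain ⟨hj1, hjn⟩ := Finset.mem_Icc.mp hj
    have hj0 : (0:ℝ) < (j:ℝ) := by exact_mod_cast Nat.lt_of_lt_of_le Nat.zero_lt_one hj1
    set x : ℝ := 2 * Real.pi * j / N with hxdef
    have hx : 0 ≤ x := by positivity
    have harg : (2 * Real.pi * I * j / n : ℂ) = (x : ℂ) * I := by
      simp only [hxdef, hNdef]; push_cast; ring
    have hb := key_bound x hx
    rw [← harg] at hb
    have hb2 : ‖Complex.exp (2 * Real.pi * I * j / n) - 1 - 2 * Real.pi * I * j / n‖ ^ 2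
        ≤ x ^ 4 := by
      have := pow_le_pow_left₀ (norm_nonneg _) hb 2
      calc ‖Complex.exp (2 * Real.pi * I * j / n) - 1 - 2 * Real.pi * I * j / n‖ ^ 2
          ≤ (x ^ 2) ^ 2 := this
        _ = x ^ 4 := by ring
    calc ‖θ j‖ ^ 2 / (j:ℝ) ^ 2 *
            ‖Complex.exp (2 * Real.pi * I * j / n) - 1 - 2 * Real.pi * I * j / n‖ ^ 2
        ≤ ‖θ j‖ ^ 2 / (j:ℝ) ^ 2 * x ^ 4 := by
          apply mul_le_mul_of_nonneg_left hb2 (by positivity)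
      _ = (2 * Real.pi) ^ 4 / N ^ 4 * ((j:ℝ) ^ 2 * ‖θ j‖ ^ 2) := by
          rw [hxdef]; field_simp
  -- termwise bound 2
  have hterm2 : ∀ j ∈ Finset.Icc 1 n,
      (j:ℝ) ^ 2 * ‖θ j‖ ^ 2 ≤ M * ((j:ℝ) ^ (2 * β) * ‖θ j‖ ^ 2) := by
    intro j hj
    obtain ⟨hj1, hjn⟩ := Finset.mem_Icc.mp hj
    have hj0 : (0:ℝ) < (j:ℝ) := by exact_mod_cast Nat.lt_of_lt_of_le Nat.zero_lt_one hj1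
    have hj1' : (1:ℝ) ≤ (j:ℝ) := by exact_mod_cast hj1
    have hjn' : (j:ℝ) ≤ N := by rw [hNdef]; exact_mod_cast hjn
    have hsplit : (j:ℝ) ^ 2 = (j:ℝ) ^ (2 * β) * (j:ℝ) ^ ((2:ℝ) - 2 * β) := by
      rw [← Real.rpow_add hj0]
      norm_num
    have hexp : (j:ℝ) ^ ((2:ℝ) - 2 * β) ≤ M := by
      rcases le_or_gt β 1 with hb1 | hb1
      · refine le_trans ?_ (le_max_right _ _)
        exact Real.rpow_le_rpow hj0.le hjn' (by linarith)
      · refine le_trans ?_ (le_max_left _ _)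
        exact Real.rpow_le_one_of_one_le_of_nonpos hj1' (by linarith)
    calc (j:ℝ) ^ 2 * ‖θ j‖ ^ 2
        = (j:ℝ) ^ (2 * β) * ‖θ j‖ ^ 2 * (j:ℝ) ^ ((2:ℝ) - 2 * β) := by rw [hsplit]; ring
      _ ≤ (j:ℝ) ^ (2 * β) * ‖θ j‖ ^ 2 * M :=
          mul_le_mul_of_nonneg_left hexp (by positivity)
      _ = M * ((j:ℝ) ^ (2 * β) * ‖θ j‖ ^ 2) := by ring
  have hsum2 : ∑ j ∈ Finset.Icc 1 n, (j:ℝ) ^ 2 * ‖θ j‖ ^ 2 ≤ M * L ^ 2 := by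
    calc ∑ j ∈ Finset.Icc 1 n, (j:ℝ) ^ 2 * ‖θ j‖ ^ 2
        ≤ ∑ j ∈ Finset.Icc 1 n, M * ((j:ℝ) ^ (2 * β) * ‖θ j‖ ^ 2) :=
          Finset.sum_le_sum hterm2
      _ = M * ∑ j ∈ Finset.Icc 1 n, (j:ℝ) ^ (2 * β) * ‖θ j‖ ^ 2 := by
          rw [Finset.mul_sum]
      _ ≤ M * L ^ 2 := mul_le_mul_of_nonneg_left hθ hM0
  have hsum1 : ∑ j ∈ Finset.Icc 1 n,
      ‖θ j‖ ^ 2 / (j:ℝ) ^ 2 *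
        ‖Complex.exp (2 * Real.pi * I * j / n) - 1 - 2 * Real.pi * I * j / n‖ ^ 2
      ≤ (2 * Real.pi) ^ 4 / N ^ 4 * (M * L ^ 2) := by
    calc _ ≤ ∑ j ∈ Finset.Icc 1 n, (2 * Real.pi) ^ 4 / N ^ 4 * ((j:ℝ) ^ 2 * ‖θ j‖ ^ 2) :=
          Finset.sum_le_sum hterm
      _ = (2 * Real.pi) ^ 4 / N ^ 4 * ∑ j ∈ Finset.Icc 1 n, (j:ℝ) ^ 2 * ‖θ j‖ ^ 2 := by
          rw [Finset.mul_sum]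
      _ ≤ (2 * Real.pi) ^ 4 / N ^ 4 * (M * L ^ 2) :=
          mul_le_mul_of_nonneg_left hsum2 (by positivity)
  have hNeg2 : N ^ (-2 : ℝ) = (N ^ (2:ℕ))⁻¹ := by
    rw [← Real.rpow_natCast N 2, ← Real.rpow_neg hN.le]
    norm_num
  have hMmax : M * N ^ (-2 : ℝ) = max (N ^ (-2 : ℝ)) (N ^ (-(2 * β))) := by
    rw [hMdef, max_mul_of_nonneg _ _ (by positivity : (0:ℝ) ≤ N ^ (-2:ℝ)), one_mul,
      ← Real.rpow_add hN]
    have he : (2:ℝ) - 2 * β + -2 = -(2 * β) := by ring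
    rw [he]
  calc N ^ 2 * ∑ j ∈ Finset.Icc 1 n,
          ‖θ j‖ ^ 2 / (j:ℝ) ^ 2 *
            ‖Complex.exp (2 * Real.pi * I * j / n) - 1 - 2 * Real.pi * I * j / n‖ ^ 2
      ≤ N ^ 2 * ((2 * Real.pi) ^ 4 / N ^ 4 * (M * L ^ 2)) :=
        mul_le_mul_of_nonneg_left hsum1 (by positivity)
    _ = (2 * Real.pi) ^ 4 * L ^ 2 * (M * N ^ (-2 : ℝ)) := by
        rw [hNeg2]; field_simp
    _ = (2 * Real.pi) ^ 4 * L ^ 2 * max (N ^ (-2 : ℝ)) (N ^ (-(2 * β))) := by rw [hMmax]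
end
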